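/- For a complex number q with |q| < 1 and x with |x| < 1, the series ∑_{l≥1} x^l/(l(1-q^l)) converges and exp(∑_{l≥1} x^l/(l(1-q^l))) = 1/∏_{r≥0}(1 - q^r x), i.e. equals the reciprocal of the q-Pochhammer symbol (x;q)_∞. -/

import Mathlib

/-- For `‖q‖ < 1` and `‖x‖ < 1`, the series `∑_{l≥1} x^l/(l(1-q^l))` converges and its
exponential equals the reciprocal of the q-Pochhammer symbol `(x;q)_∞ = ∏_{r≥0}(1-q^r x)`. -/
theorem stmt0 (q x : ℂ) (hq : ‖q‖ < 1) (hx : ‖x‖ < 1) :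
    Summable (fun l : ℕ => x ^ (l + 1) / (((l : ℂ) + 1) * (1 - q ^ (l + 1)))) ∧
      Complex.exp (∑' l : ℕ, x ^ (l + 1) / (((l : ℂ) + 1) * (1 - q ^ (l + 1)))) =
        1 / ∏' r : ℕ, (1 - q ^ r * x) := by
  -- the double-indexed series
  set f : ℕ × ℕ → ℂ := fun p => (q ^ p.2 * x) ^ (p.1 + 1) / ((p.1 : ℂ) + 1) with hfdef
  have hqrx : ∀ r : ℕ, ‖q ^ r * x‖ < 1 := by
    intro r
    rw [norm_mul, norm_pow]
    calc ‖q‖ ^ r * ‖x‖ ≤ 1 * ‖x‖ := by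
          exact mul_le_mul_of_nonneg_right (pow_le_one₀ (norm_nonneg q) hq.le) (norm_nonneg x)
      _ = ‖x‖ := one_mul _
      _ < 1 := hx
  have hne : ∀ r : ℕ, (1 : ℂ) - q ^ r * x ≠ 0 := by
    intro r h
    have : ‖(1 : ℂ)‖ ≤ ‖q ^ r * x‖ := by
      have : (1 : ℂ) = q ^ r * x := by linear_combination h
      rw [← this]
    simp only [norm_one] at this
    exact absurd (hqrx r) (not_lt.mpr this)
  -- summability of the double series
  have hf : Summable f := by
    apply Summable.of_norm
    have hbound : ∀ p : ℕ × ℕ, ‖f p‖ ≤ ‖x‖ ^ (p.1 + 1) * ‖q‖ ^ p.2 := by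
      rintro ⟨l, r⟩
      simp only [hfdef, norm_div, norm_pow, norm_mul]
      have h1 : ‖((l : ℂ) + 1)‖ ≥ 1 := by
        have : ((l : ℂ) + 1) = ((l + 1 : ℕ) : ℂ) := by push_cast; ring
        rw [this, Complex.norm_natCast]
        exact_mod_cast Nat.one_le_iff_ne_zero.mpr (Nat.succ_ne_zero l)
      calc (‖q‖ ^ r * ‖x‖) ^ (l + 1) / ‖((l : ℂ) + 1)‖
          ≤ (‖q‖ ^ r * ‖x‖) ^ (l + 1) :=
            div_le_self (pow_nonneg (mul_nonneg (pow_nonneg (norm_nonneg q) r) (norm_nonneg x)) _) h1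
        _ = (‖q‖ ^ r) ^ (l + 1) * ‖x‖ ^ (l + 1) := mul_pow _ _ _
        _ ≤ ‖q‖ ^ r * ‖x‖ ^ (l + 1) := by
            apply mul_le_mul_of_nonneg_right _ (pow_nonneg (norm_nonneg x) _)
            rw [← pow_mul]
            exact pow_le_pow_of_le_one (norm_nonneg q) hq.le (Nat.le_mul_of_pos_right r l.succ_pos)
        _ = ‖x‖ ^ (l + 1) * ‖q‖ ^ r := mul_comm _ _
    apply Summable.of_nonneg_of_le (fun p => norm_nonneg _) hbound
    have h1 : Summable (fun l : ℕ => ‖x‖ ^ (l + 1)) :=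
      (summable_geometric_of_lt_one (norm_nonneg x) hx).comp_injective (add_left_injective 1)
    have h2 : Summable (fun r : ℕ => ‖q‖ ^ r) := summable_geometric_of_lt_one (norm_nonneg q) hq
    exact h1.mul_of_nonneg h2 (fun l => pow_nonneg (norm_nonneg x) _)
      (fun r => pow_nonneg (norm_nonneg q) _)
  set A : ℂ := ∑' p : ℕ × ℕ, f p with hA
  -- fiberwise over l: geometric series in r
  have hrow : ∀ l : ℕ, HasSum (fun r : ℕ => f (l, r))
      (x ^ (l + 1) / (((l : ℂ) + 1) * (1 - q ^ (l + 1)))) := by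
    intro l
    have hql : ‖q ^ (l + 1)‖ < 1 := by
      rw [norm_pow]; exact pow_lt_one₀ (norm_nonneg q) hq (Nat.succ_ne_zero l)
    have hgeom := hasSum_geometric_of_norm_lt_one hql
    have h := hgeom.mul_left (x ^ (l + 1) / ((l : ℂ) + 1))
    have he : x ^ (l + 1) / (((l : ℂ) + 1) * (1 - q ^ (l + 1)))
        = x ^ (l + 1) / ((l : ℂ) + 1) * (1 - q ^ (l + 1))⁻¹ := by
      rw [← div_div, div_eq_mul_inv]
    have hfun : (fun r : ℕ => f (l, r))
        = fun r : ℕ => x ^ (l + 1) / ((l : ℂ) + 1) * (q ^ (l + 1)) ^ r := by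
      funext r
      simp only [hfdef]
      rw [mul_pow, ← pow_mul, ← pow_mul, mul_comm r (l + 1)]
      ring
    rw [he, hfun]
    exact h
  have hsumF : HasSum (fun l : ℕ => x ^ (l + 1) / (((l : ℂ) + 1) * (1 - q ^ (l + 1)))) A :=
    hf.hasSum.prod_fiberwise hrow
  -- fiberwise over r: log series
  have hcol : ∀ r : ℕ, HasSum (fun l : ℕ => f (l, r)) (-Complex.log (1 - q ^ r * x)) := by
    intro r
    have h := Complex.hasSum_taylorSeries_neg_log (hqrx r)
    have h2 := (hasSum_nat_add_iff' 1).mpr h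
    simp only [Finset.range_one, Finset.sum_singleton, pow_zero, Nat.cast_zero, div_zero,
      sub_zero] at h2
    convert h2 using 2 with l
    · rfl
    simp only [hfdef]
    push_cast
    ring_nf
  have hswap : ∑' b : ℕ × ℕ, f b.swap = A := (Equiv.prodComm ℕ ℕ).tsum_eq f
  have hsumG : HasSum (fun r : ℕ => -Complex.log (1 - q ^ r * x)) A :=
    hswap ▸ (hf.prod_symm).hasSum.prod_fiberwise (fun r => hcol r)
  refine ⟨hsumF.summable, ?_⟩
  rw [hsumF.tsum_eq]
  have hprod : HasProd (fun r : ℕ => (1 - q ^ r * x)) (Complex.exp (-A)) := by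
    have := hsumG.neg.cexp
    convert this using 2 with r
    simp only [Function.comp, neg_neg]
    exact (Complex.exp_log (hne r)).symm
  rw [hprod.tprod_eq, one_div, ← Complex.exp_neg, neg_neg]
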